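/- (Average-degree bound.) Let G be a simple graph with v vertices and e edges, and let n < v. If C₁, …, C_k are mutually orthogonal n-colorings of G, then k·v·(v−n) ≤ n·(v·(v−1) − 2e). (Equivalently, with average degree D = 2e/v, k ≤ ⌊(v−D−1)·n/(v−n)⌋.) -/

import Mathlib

/-- A proper `n`-coloring of a simple graph `G`. -/
def IsProperColoring {V : Type*} (G : SimpleGraph V) (n : ℕ) (C : V → Fin n) : Prop :=
  ∀ u v, G.Adj u v → C u ≠ C v

/-- Two `n`-colorings are orthogonal if whenever two distinct vertices share a color
in the first, they have distinct colors in the second. -/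
def OrthogonalColorings {V : Type*} {n : ℕ} (C₁ C₂ : V → Fin n) : Prop :=
  ∀ u v, u ≠ v → C₁ u = C₁ v → C₂ u ≠ C₂ v

open Finset

/-- Average-degree bound: if `G` has `v` vertices and `e` edges and `n < v`, then
`k` mutually orthogonal `n`-colorings satisfy `k·v·(v − n) ≤ n·(v·(v − 1) − 2e)`. -/
theorem stmt_3 {V : Type*} [Fintype V] (G : SimpleGraph V) [Fintype G.edgeSet]
    (v e n k : ℕ) (hv : v = Fintype.card V) (he : e = G.edgeFinset.card)
    (hn : n < v)
    (C : Fin k → V → Fin n)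
    (hproper : ∀ i, IsProperColoring G n (C i))
    (horth : ∀ i j, i ≠ j → OrthogonalColorings (C i) (C j)) :
    (k : ℤ) * v * ((v : ℤ) - n) ≤ (n : ℤ) * ((v : ℤ) * ((v : ℤ) - 1) - 2 * e) := by
  classical
  let P : Fin k → Finset (V × V) :=
    fun i => univ.filter (fun p => p.1 ≠ p.2 ∧ C i p.1 = C i p.2)
  let N : Finset (V × V) := univ.filter (fun p => p.1 ≠ p.2 ∧ ¬ G.Adj p.1 p.2)
  have hsub : ∀ i, P i ⊆ N := by
    intro i p hp
    simp only [P, N, mem_filter, mem_univ, true_and] at hp ⊢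
    exact ⟨hp.1, fun hadj => hproper i _ _ hadj hp.2⟩
  have hdisj : ((univ : Finset (Fin k)) : Set (Fin k)).PairwiseDisjoint P := by
    intro i _ j _ hij
    refine Finset.disjoint_left.2 (fun p hpi hpj => ?_)
    simp only [P, mem_filter, mem_univ, true_and] at hpi hpj
    exact horth i j hij p.1 p.2 hpi.1 hpi.2 hpj.2
  have hsumN : ∑ i, (P i).card ≤ N.card := by
    rw [← Finset.card_biUnion hdisj]
    exact card_le_card (biUnion_subset.2 fun i _ => hsub i)
  -- count of adjacent ordered pairs
  have hAdj : (univ.filter (fun p : V × V => G.Adj p.1 p.2)).card = 2 * e := by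
    rw [he]
    have h3 : (univ.filter (fun p : V × V => G.Adj p.1 p.2)).card = ∑ u, G.degree u := by
      rw [Finset.card_eq_sum_card_fiberwise (f := Prod.fst) (t := univ) (fun _ _ => mem_univ _)]
      refine Finset.sum_congr rfl fun u _ => ?_
      have hfib : (univ.filter (fun p : V × V => G.Adj p.1 p.2)).filter
          (fun p => p.1 = u) = {u} ×ˢ G.neighborFinset u := by
        ext p
        simp only [mem_filter, mem_univ, true_and, Finset.mem_product, mem_singleton,
          SimpleGraph.mem_neighborFinset]
        constructor
        · rintro ⟨h1, h2⟩; exact ⟨h2, h2 ▸ h1⟩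
        · rintro ⟨h1, h2⟩
          exact ⟨by rw [h1]; exact h2, h1⟩
      rw [hfib, Finset.card_product, Finset.card_singleton, one_mul,
        SimpleGraph.card_neighborFinset_eq_degree]
    rw [h3, SimpleGraph.sum_degrees_eq_twice_card_edges]
    congr!
  have hNcard : N.card + 2 * e = v * v - v := by
    have key2 := Finset.card_filter_add_card_filter_not
      (s := univ.filter (fun p : V × V => p.1 ≠ p.2))
      (p := fun p : V × V => ¬ G.Adj p.1 p.2)
    have e1 : (univ.filter (fun p : V × V => p.1 ≠ p.2)).filter
        (fun p => ¬ G.Adj p.1 p.2) = N := by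
      rw [Finset.filter_filter]
    have e2 : (univ.filter (fun p : V × V => p.1 ≠ p.2)).filter
        (fun p => ¬ ¬ G.Adj p.1 p.2) = univ.filter (fun p : V × V => G.Adj p.1 p.2) := by
      ext p
      simp only [mem_filter, mem_univ, true_and, not_not]
      exact ⟨fun h => h.2, fun h => ⟨h.ne, h⟩⟩
    have e3 : (univ.filter (fun p : V × V => p.1 ≠ p.2)).card = v * v - v := by
      have : (univ : Finset V).offDiag = univ.filter (fun p : V × V => p.1 ≠ p.2) := by
        ext p; simp [Finset.mem_offDiag]
      rw [← this, Finset.offDiag_card, Finset.card_univ, hv]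
    rw [e1, e2, e3] at key2
    rw [← key2, hAdj]
  -- lower bound on each P i
  have hlow : ∀ i, v * v ≤ n * (P i).card + n * v := by
    intro i
    set f : Fin n → ℕ := fun c => (univ.filter (fun u => C i u = c)).card with hf
    have hfsum : ∑ c, f c = v := by
      rw [hv, ← Finset.card_univ (α := V),
        Finset.card_eq_sum_card_fiberwise (f := C i) (t := univ) (fun _ _ => mem_univ _)]
    have hP' : (univ.filter (fun p : V × V => C i p.1 = C i p.2)).card = ∑ c, f c ^ 2 := by
      rw [Finset.card_eq_sum_card_fiberwise (f := fun p => C i p.1) (t := univ)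
        (fun _ _ => mem_univ _)]
      refine Finset.sum_congr rfl fun c _ => ?_
      have hfib : (univ.filter (fun p : V × V => C i p.1 = C i p.2)).filter
          (fun p => C i p.1 = c) = (univ.filter (fun u => C i u = c)) ×ˢ
          (univ.filter (fun u => C i u = c)) := by
        ext p
        simp only [mem_filter, mem_univ, true_and, Finset.mem_product]
        constructor
        · rintro ⟨h1, h2⟩; exact ⟨h2, h1.symm.trans h2⟩
        · rintro ⟨h1, h2⟩; exact ⟨h1.trans h2.symm, h1⟩
      rw [hfib, Finset.card_product, hf, sq]
    have hsplit : (P i).card + v =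
        (univ.filter (fun p : V × V => C i p.1 = C i p.2)).card := by
      have key3 := Finset.card_filter_add_card_filter_not
        (s := univ.filter (fun p : V × V => C i p.1 = C i p.2))
        (p := fun p : V × V => p.1 ≠ p.2)
      have e1 : (univ.filter (fun p : V × V => C i p.1 = C i p.2)).filter
          (fun p => p.1 ≠ p.2) = P i := by
        rw [Finset.filter_filter]
        congr 1
        ext p
        exact ⟨fun h => ⟨h.2, h.1⟩, fun h => ⟨h.2, h.1⟩⟩
      have e2 : (univ.filter (fun p : V × V => C i p.1 = C i p.2)).filter
          (fun p => ¬ p.1 ≠ p.2) = univ.filter (fun p : V × V => p.1 = p.2) := by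
        ext p
        simp only [mem_filter, mem_univ, true_and, not_not]
        exact ⟨fun h => h.2, fun h => ⟨by rw [h], h⟩⟩
      have e3 : (univ.filter (fun p : V × V => p.1 = p.2)).card = v := by
        have : (univ.filter (fun p : V × V => p.1 = p.2)) = (univ : Finset V).diag := by
          ext p; simp [Finset.mem_diag]
        rw [this, Finset.diag_card, Finset.card_univ, hv]
      rw [e1, e2, e3] at key3
      exact key3
    have hcs : (∑ c, f c) ^ 2 ≤ n * ∑ c, f c ^ 2 := by
      simpa using sq_sum_le_card_mul_sum_sq (s := (univ : Finset (Fin n))) (f := f)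
    rw [hfsum] at hcs
    calc v * v = v ^ 2 := (sq v).symm
    _ ≤ n * ∑ c, f c ^ 2 := hcs
    _ = n * ((P i).card + v) := by rw [← hP', hsplit]
    _ = n * (P i).card + n * v := by ring
  -- combine
  have key : k * (v * v) ≤ n * N.card + k * (n * v) := by
    calc k * (v * v) = ∑ _i : Fin k, v * v := by simp [mul_comm]
    _ ≤ ∑ i, (n * (P i).card + n * v) := Finset.sum_le_sum fun i _ => hlow i
    _ = n * (∑ i, (P i).card) + k * (n * v) := by
        rw [Finset.sum_add_distrib, Finset.mul_sum]; simp [mul_comm]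
    _ ≤ n * N.card + k * (n * v) :=
        add_le_add_left (Nat.mul_le_mul_left n hsumN) _
  have hvv : v ≤ v * v := Nat.le_mul_of_pos_left v (by omega)
  have hNz : (N.card : ℤ) = v * v - v - 2 * e := by
    have h := hNcard
    zify [hvv] at h
    omega
  have keyz : (k : ℤ) * (v * v) ≤ n * N.card + k * (n * v) := by exact_mod_cast key
  rw [hNz] at keyz
  nlinarith [keyz]
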